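/- For every integer n ≥ 2, the (vertex) connectivity of the bubble-sort graph B_n equals n − 1, i.e., κ(B_n) = n − 1. -/
import Mathlib


open SimpleGraph

/-- The bubble-sort graph `B_n`: the Cayley graph on `Sym(n)` whose connection set is the set of
adjacent transpositions `[i, i+1]`, `1 ≤ i ≤ n-1`; `σ` and `τ` are adjacent iff
`τ = σ * [i, i+1]` for some `i`. -/
def bubbleSortGraph (n : ℕ) : SimpleGraph (Equiv.Perm (Fin n)) :=
  SimpleGraph.fromRel (fun σ τ => ∃ i j : Fin n, (j : ℕ) = (i : ℕ) + 1 ∧ τ = σ * Equiv.swap i j)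

/-- `T` is a family of internally disjoint trees connecting `S` in `G`: each `T i` is a tree
(as a subgraph of `G`) containing all vertices of `S`, the trees are pairwise edge disjoint, and
any two of them share exactly the vertices of `S`. -/
def InternallyDisjointTrees {V : Type*} (G : SimpleGraph V) (S : Set V) {ℓ : ℕ}
    (T : Fin ℓ → G.Subgraph) : Prop :=
  (∀ i, (T i).coe.IsTree ∧ S ⊆ (T i).verts) ∧
    Pairwise fun i j =>
      (T i).edgeSet ∩ (T j).edgeSet = ∅ ∧ (T i).verts ∩ (T j).verts = S

/-- `κ_G(S)`: the maximum number of internally disjoint trees connecting `S` in `G`. -/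
noncomputable def treeConnectivity {V : Type*} (G : SimpleGraph V) (S : Set V) : ℕ :=
  sSup {ℓ : ℕ | ∃ T : Fin ℓ → G.Subgraph, InternallyDisjointTrees G S T}

/-- The generalized `k`-connectivity `κ_k(G) = min {κ_G(S) : S ⊆ V(G), |S| = k}`. -/
noncomputable def generalizedConnectivity {V : Type*} (G : SimpleGraph V) (k : ℕ) : ℕ :=
  sInf {m : ℕ | ∃ S : Finset V, S.card = k ∧ m = treeConnectivity G ↑S}

/-- The vertex connectivity `κ(G)`: the minimum cardinality of a set `S` of vertices such that
`G - S` is disconnected or has at most one vertex. -/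
noncomputable def vertexConnectivity {V : Type*} (G : SimpleGraph V) : ℕ :=
  sInf {k : ℕ | ∃ S : Set V,
    S.ncard = k ∧ (¬ (G.induce Sᶜ).Connected ∨ Sᶜ.ncard ≤ 1)}

/-- `V_i`: the set of permutations `σ` of `[n]` with `σ(n) = i` (last entry equal to `i`). -/
def Vpart (n : ℕ) (hn : 0 < n) (i : Fin n) : Set (Equiv.Perm (Fin n)) :=
  {σ | σ ⟨n - 1, Nat.sub_lt hn Nat.one_pos⟩ = i}

/-! ### Auxiliary lemmas -/

lemma bsg_adj {n : ℕ} {σ τ : Equiv.Perm (Fin n)} :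
    (bubbleSortGraph n).Adj σ τ ↔ ∃ i j : Fin n, (j : ℕ) = (i : ℕ) + 1 ∧ τ = σ * Equiv.swap i j := by
  constructor
  · rintro ⟨hne, (⟨i, j, hij, rfl⟩ | ⟨i, j, hij, rfl⟩)⟩
    · exact ⟨i, j, hij, rfl⟩
    · exact ⟨i, j, hij, by rw [mul_assoc, Equiv.swap_mul_self, mul_one]⟩
  · rintro ⟨i, j, hij, rfl⟩
    refine ⟨?_, Or.inl ⟨i, j, hij, rfl⟩⟩
    intro h
    have h2 : σ j = σ i := by
      conv_lhs => rw [h, Equiv.Perm.mul_apply, Equiv.swap_apply_right]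
    have : (j : ℕ) = (i : ℕ) := congrArg Fin.val (σ.injective h2)
    omega

lemma exists_perm_two {α : Type*} [DecidableEq α] {i a j b : α} (hia : i ≠ a) (hjb : j ≠ b) :
    ∃ π : Equiv.Perm α, π i = j ∧ π a = b := by
  have h1 : Equiv.swap a b i ≠ b := by
    intro h
    have : Equiv.swap a b i = Equiv.swap a b a := by rw [h, Equiv.swap_apply_left]
    exact hia ((Equiv.swap a b).injective this)
  refine ⟨Equiv.swap (Equiv.swap a b i) j * Equiv.swap a b, ?_, ?_⟩
  · simp [Equiv.Perm.mul_apply]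
  · simp only [Equiv.Perm.mul_apply, Equiv.swap_apply_left]
    exact Equiv.swap_apply_of_ne_of_ne (Ne.symm h1) (Ne.symm hjb)

/-- embedding of `Perm (Fin n)` onto the set of `σ` with `σ 0 = c`. -/
def phiBS {n : ℕ} (c : Fin (n+1)) (e : Equiv.Perm (Fin n)) : Equiv.Perm (Fin (n+1)) :=
  Equiv.Perm.decomposeFin.symm (c, e)

lemma phiBS_zero {n : ℕ} (c : Fin (n+1)) (e : Equiv.Perm (Fin n)) : phiBS c e 0 = c :=
  Equiv.Perm.decomposeFin_symm_apply_zero c e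

lemma phiBS_inj {n : ℕ} (c : Fin (n+1)) : Function.Injective (phiBS c) := by
  intro e₁ e₂ h
  have := Equiv.Perm.decomposeFin.symm.injective (a₁ := (c, e₁)) (a₂ := (c, e₂)) h
  exact (Prod.mk.injEq _ _ _ _).mp this |>.2

lemma phiBS_surj {n : ℕ} {c : Fin (n+1)} {σ : Equiv.Perm (Fin (n+1))} (h : σ 0 = c) :
    ∃ e, phiBS c e = σ := by
  obtain ⟨⟨c', e⟩, hp⟩ : ∃ p, Equiv.Perm.decomposeFin.symm p = σ :=
    ⟨Equiv.Perm.decomposeFin σ, Equiv.Perm.decomposeFin.symm_apply_apply σ⟩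
  have hc : c' = c := by rw [← h, ← hp]; exact (phiBS_zero c' e).symm
  subst hc; exact ⟨e, hp⟩

lemma phiBS_mul_swap {n : ℕ} (c : Fin (n+1)) (e : Equiv.Perm (Fin n)) (x y : Fin n) :
    phiBS c (e * Equiv.swap x y) = phiBS c e * Equiv.swap x.succ y.succ := by
  ext z
  refine Fin.cases ?_ (fun w => ?_) z
  · rw [phiBS_zero, Equiv.Perm.mul_apply,
      Equiv.swap_apply_of_ne_of_ne (Fin.succ_ne_zero x).symm (Fin.succ_ne_zero y).symm,
      phiBS_zero]
  · rw [Equiv.Perm.mul_apply, Fin.succ_injective n |>.swap_apply,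
      phiBS, Equiv.Perm.decomposeFin_symm_apply_succ,
      phiBS, Equiv.Perm.decomposeFin_symm_apply_succ, Equiv.Perm.mul_apply]

lemma phiBS_adj {n : ℕ} (c : Fin (n+1)) {e₁ e₂ : Equiv.Perm (Fin n)}
    (h : (bubbleSortGraph n).Adj e₁ e₂) :
    (bubbleSortGraph (n+1)).Adj (phiBS c e₁) (phiBS c e₂) := by
  rw [bsg_adj] at h ⊢
  obtain ⟨i, j, hij, rfl⟩ := h
  exact ⟨i.succ, j.succ, by simp [Fin.val_succ, hij], phiBS_mul_swap c e₁ i j⟩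

lemma fiber_card {k : ℕ} {i a : Fin (k+2)} (hia : i ≠ a) :
    Nat.factorial k ≤ {σ : Equiv.Perm (Fin (k+2)) | σ 0 = i ∧ σ 1 = a}.ncard := by
  obtain ⟨π, hπ0, hπ1⟩ := exists_perm_two (i := (0 : Fin (k+2))) (a := 1) (j := i) (b := a)
    (by simp [Fin.ext_iff]) hia
  set f : Equiv.Perm (Fin k) → Equiv.Perm (Fin (k+2)) :=
    fun τ => π * phiBS 0 (phiBS 0 τ) with hf
  have hval : ∀ τ, f τ 0 = i ∧ f τ 1 = a := by
    intro τ
    have h1 : phiBS 0 (phiBS 0 τ) 1 = 1 := by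
      rw [phiBS, Equiv.Perm.decomposeFin_symm_apply_one, phiBS_zero, Equiv.swap_self]
      simp [Fin.succ_zero_eq_one]
    constructor
    · rw [hf]; simp only [Equiv.Perm.mul_apply, phiBS_zero]; exact hπ0
    · rw [hf]; simp only [Equiv.Perm.mul_apply, h1]; exact hπ1
  have hinj : Function.Injective f := by
    intro τ₁ τ₂ h
    rw [hf] at h
    exact phiBS_inj _ (phiBS_inj _ (mul_left_cancel h))
  have hsub : Set.range f ⊆ {σ : Equiv.Perm (Fin (k+2)) | σ 0 = i ∧ σ 1 = a} := by
    rintro σ ⟨τ, rfl⟩; exact hval τ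
  calc Nat.factorial k = (Set.range f).ncard := by
        rw [← Set.image_univ, Set.ncard_image_of_injective _ hinj, Set.ncard_univ,
          Nat.card_eq_fintype_card, Fintype.card_perm, Fintype.card_fin]
    _ ≤ _ := Set.ncard_le_ncard hsub (Set.toFinite _)

lemma reach_in_part {n : ℕ} (S : Set (Equiv.Perm (Fin (n+1)))) (c : Fin (n+1))
    (hconn : ((bubbleSortGraph n).induce ((phiBS c) ⁻¹' S)ᶜ).Connected)
    {u v : Equiv.Perm (Fin (n+1))} (hu : u ∈ Sᶜ) (hv : v ∈ Sᶜ) (hu0 : u 0 = c) (hv0 : v 0 = c) :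
    ((bubbleSortGraph (n+1)).induce Sᶜ).Reachable ⟨u, hu⟩ ⟨v, hv⟩ := by
  obtain ⟨eu, heu⟩ := phiBS_surj hu0
  obtain ⟨ev, hev⟩ := phiBS_surj hv0
  have heu' : eu ∈ ((phiBS c) ⁻¹' S)ᶜ := by
    intro h; exact hu (by rwa [Set.mem_preimage, heu] at h)
  have hev' : ev ∈ ((phiBS c) ⁻¹' S)ᶜ := by
    intro h; exact hv (by rwa [Set.mem_preimage, hev] at h)
  let F : ((bubbleSortGraph n).induce ((phiBS c) ⁻¹' S)ᶜ) →g ((bubbleSortGraph (n+1)).induce Sᶜ) :=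
    ⟨fun x => ⟨phiBS c x.1, x.2⟩, fun h => phiBS_adj c h⟩
  have hr := (hconn.preconnected ⟨eu, heu'⟩ ⟨ev, hev'⟩).map F
  have h1 : F ⟨eu, heu'⟩ = ⟨u, hu⟩ := Subtype.ext heu
  have h2 : F ⟨ev, hev'⟩ = ⟨v, hv⟩ := Subtype.ext hev
  rwa [h1, h2] at hr

lemma bsg_del_connected : ∀ n, 2 ≤ n → ∀ S : Set (Equiv.Perm (Fin n)), S.ncard + 2 ≤ n →
    ((bubbleSortGraph n).induce Sᶜ).Connected := by
  intro n hn
  induction n, hn using Nat.le_induction with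
  | base =>
    intro S hS
    have hS0 : S = ∅ := by
      rw [← Set.ncard_eq_zero (Set.toFinite S)]; omega
    subst hS0
    rw [connected_iff]
    constructor
    · rintro ⟨u, hu⟩ ⟨v, hv⟩
      rcases eq_or_ne u v with h | h
      · exact (Subtype.ext h : (⟨u, hu⟩ : {x // x ∈ (∅ : Set (Equiv.Perm (Fin 2)))ᶜ}) = ⟨v, hv⟩) ▸
          SimpleGraph.Reachable.refl _
      · refine SimpleGraph.Adj.reachable ?_
        show (bubbleSortGraph 2).Adj u v
        refine bsg_adj.mpr ⟨0, 1, by decide, ?_⟩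
        revert h; revert u v; decide
    · exact ⟨⟨1, by simp⟩⟩
  | succ m hm IH =>
    obtain ⟨k, rfl⟩ : ∃ k, m = k + 1 := ⟨m - 1, by omega⟩
    intro S hS
    have hScard : S.ncard ≤ k := by omega
    set G := bubbleSortGraph (k+2) with hG
    set touched : Set (Fin (k+2)) := (fun σ : Equiv.Perm (Fin (k+2)) => σ 0) '' S with htouched
    have htc : touched.ncard ≤ k :=
      le_trans (Set.ncard_image_le (Set.toFinite S)) hScard
    have hfree2 : 1 < touchedᶜ.ncard := by
      have := Set.ncard_add_ncard_compl touched
      rw [Nat.card_eq_fintype_card, Fintype.card_fin] at this; omega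
    obtain ⟨a, ha, b, hb, hab⟩ := (Set.one_lt_ncard (Set.toFinite _)).mp hfree2
    have hfreeS : ∀ {p : Fin (k+2)}, p ∉ touched → ∀ {σ : Equiv.Perm (Fin (k+2))},
        σ 0 = p → σ ∉ S := by
      intro p hp σ h0 hσ; exact hp ⟨σ, hσ, h0⟩
    have h01 : ((1 : Fin (k+2)) : ℕ) = ((0 : Fin (k+2)) : ℕ) + 1 := by simp
    have hne01 : (0 : Fin (k+2)) ≠ 1 := by simp [Fin.ext_iff]
    set s01 : Equiv.Perm (Fin (k+2)) := Equiv.swap 0 1 with hs01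
    have hout : ∀ σ : Equiv.Perm (Fin (k+2)), G.Adj σ (σ * s01) := fun σ =>
      bsg_adj.mpr ⟨0, 1, h01, rfl⟩
    have hout0 : ∀ σ : Equiv.Perm (Fin (k+2)), (σ * s01) 0 = σ 1 := by
      intro σ; rw [Equiv.Perm.mul_apply, hs01, Equiv.swap_apply_left]
    have hadj' : ∀ {x y : Equiv.Perm (Fin (k+2))} (hx : x ∈ Sᶜ) (hy : y ∈ Sᶜ),
        G.Adj x y → (G.induce Sᶜ).Adj ⟨x, hx⟩ ⟨y, hy⟩ := by
      intro x y hx hy h; exact h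
    have hpre : ∀ c : Fin (k+2), S ∩ {σ | σ 0 = c} = phiBS c '' (phiBS c ⁻¹' S) := by
      intro c; ext σ; constructor
      · rintro ⟨hσS, h0⟩
        obtain ⟨e, rfl⟩ := phiBS_surj h0
        exact ⟨e, hσS, rfl⟩
      · rintro ⟨e, heS, rfl⟩; exact ⟨heS, phiBS_zero c e⟩
    have hpart : ∀ c : Fin (k+2), (phiBS c ⁻¹' S).ncard + 2 ≤ k + 1 →
        ∀ {u v : Equiv.Perm (Fin (k+2))} (hu : u ∈ Sᶜ) (hv : v ∈ Sᶜ), u 0 = c → v 0 = c →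
        (G.induce Sᶜ).Reachable ⟨u, hu⟩ ⟨v, hv⟩ := by
      intro c hsmall u v hu hv hu0 hv0
      exact reach_in_part S c (IH _ hsmall) hu hv hu0 hv0
    have hfreeconn : ∀ {c : Fin (k+2)}, c ∉ touched →
        ∀ {u v : Equiv.Perm (Fin (k+2))} (hu : u ∈ Sᶜ) (hv : v ∈ Sᶜ), u 0 = c → v 0 = c →
        (G.induce Sᶜ).Reachable ⟨u, hu⟩ ⟨v, hv⟩ := by
      intro c hc u v hu hv hu0 hv0
      refine hpart c ?_ hu hv hu0 hv0
      have : (phiBS c ⁻¹' S) = ∅ := by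
        ext e
        simp only [Set.mem_preimage, Set.mem_empty_iff_false, iff_false]
        intro h; exact hc ⟨phiBS c e, h, phiBS_zero c e⟩
      rw [this, Set.ncard_empty]; omega
    have hclaim : ∀ (u : Equiv.Perm (Fin (k+2))) (hu : u ∈ Sᶜ),
        ∃ (w : Equiv.Perm (Fin (k+2))) (hw : w ∈ Sᶜ),
        w 0 ∉ touched ∧ (G.induce Sᶜ).Reachable ⟨u, hu⟩ ⟨w, hw⟩ := by
      intro u hu
      by_cases hc : u 0 ∈ touched
      · by_cases hsmall : (phiBS (u 0) ⁻¹' S).ncard + 2 ≤ k + 1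
        · have hia : u 0 ≠ a := fun h => ha (h ▸ hc)
          have hfc := fiber_card hia
          have hexit : ∃ σ : Equiv.Perm (Fin (k+2)), (σ 0 = u 0 ∧ σ 1 = a) ∧ σ ∉ S := by
            by_contra h
            push_neg at h
            have hsub : {σ : Equiv.Perm (Fin (k+2)) | σ 0 = u 0 ∧ σ 1 = a} ⊆
                S ∩ {σ | σ 0 = u 0} := fun σ hσ => ⟨h σ ⟨hσ.1, hσ.2⟩, hσ.1⟩
            have h1 := Set.ncard_le_ncard hsub (Set.toFinite _)
            rw [hpre (u 0), Set.ncard_image_of_injective _ (phiBS_inj _)] at h1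
            have h2 := Nat.self_le_factorial k
            omega
          obtain ⟨σ, ⟨hσ0, hσ1⟩, hσS⟩ := hexit
          have hσc : σ ∈ Sᶜ := hσS
          have hw0 : (σ * s01) 0 = a := (hout0 σ).trans hσ1
          have hwS : (σ * s01) ∈ Sᶜ := hfreeS ha hw0
          refine ⟨σ * s01, hwS, by rw [hw0]; exact ha, ?_⟩
          exact (hpart (u 0) hsmall hu hσc rfl hσ0).trans
            (SimpleGraph.Adj.reachable (hadj' hσc hwS (hout σ)))
        · push_neg at hsmall
          have hSsub : S ⊆ {σ | σ 0 = u 0} := by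
            have h1 : (S ∩ {σ | σ 0 = u 0}).ncard = (phiBS (u 0) ⁻¹' S).ncard := by
              rw [hpre (u 0), Set.ncard_image_of_injective _ (phiBS_inj _)]
            have h2 : S.ncard ≤ (S ∩ {σ | σ 0 = u 0}).ncard := by omega
            have h3 := Set.eq_of_subset_of_ncard_le Set.inter_subset_left h2 (Set.toFinite _)
            rw [Set.inter_eq_left] at h3
            exact h3
          have hw0 : (u * s01) 0 = u 1 := hout0 u
          have hne : u 1 ≠ u 0 := fun h => hne01 (u.injective h).symm
          have hwS : (u * s01) ∉ S := by
            intro h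
            exact hne ((hw0.symm.trans (hSsub h)))
          refine ⟨u * s01, hwS, ?_, SimpleGraph.Adj.reachable (hadj' hu hwS (hout u))⟩
          rw [hw0]
          rintro ⟨σ, hσS, hσ0⟩
          exact hne (hσ0 ▸ (hSsub hσS : σ 0 = u 0) ▸ rfl)
      · exact ⟨u, hu, hc, SimpleGraph.Reachable.refl _⟩
    rw [connected_iff]
    constructor
    · rintro ⟨u, hu⟩ ⟨v, hv⟩
      obtain ⟨w, hw, hwf, hru⟩ := hclaim u hu
      obtain ⟨w', hw', hwf', hrv⟩ := hclaim v hv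
      have hww' : (G.induce Sᶜ).Reachable ⟨w, hw⟩ ⟨w', hw'⟩ := by
        by_cases hpq : w 0 = w' 0
        · exact hfreeconn hwf' hw hw' hpq rfl
        · obtain ⟨π, hπ0, hπ1⟩ := exists_perm_two hne01 hpq
          have hπS : π ∈ Sᶜ := hfreeS hwf hπ0
          have hπ's0 : (π * s01) 0 = w' 0 := (hout0 π).trans hπ1
          have hπ'S : (π * s01) ∈ Sᶜ := hfreeS hwf' hπ's0
          exact ((hfreeconn hwf hw hπS rfl hπ0).trans
            (SimpleGraph.Adj.reachable (hadj' hπS hπ'S (hout π)))).trans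
            (hfreeconn hwf' hπ'S hw' hπ's0 rfl)
      exact (hru.trans hww').trans hrv.symm
    · have hne : Sᶜ.Nonempty := by
        rw [Set.nonempty_compl]
        intro h
        rw [h, Set.ncard_univ, Nat.card_eq_fintype_card, Fintype.card_perm,
          Fintype.card_fin] at hScard
        have h4 := Nat.self_le_factorial (k + 2)
        have h5 : (k + 1 + 1).factorial = (k + 2).factorial := rfl
        omega
      exact ⟨⟨hne.choose, hne.choose_spec⟩⟩

lemma nbhd_card {n : ℕ} (hn : 2 ≤ n) :
    {τ : Equiv.Perm (Fin n) | ∃ i j : Fin n, (j : ℕ) = (i : ℕ) + 1 ∧ τ = Equiv.swap i j}.ncard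
      = n - 1 := by
  set g : Fin (n-1) → Equiv.Perm (Fin n) := fun i =>
    Equiv.swap ⟨i.1, by have := i.isLt; omega⟩ ⟨i.1 + 1, by have := i.isLt; omega⟩ with hg
  have hrange : {τ : Equiv.Perm (Fin n) | ∃ i j : Fin n, (j : ℕ) = (i : ℕ) + 1 ∧
      τ = Equiv.swap i j} = Set.range g := by
    ext τ
    constructor
    · rintro ⟨i, j, hij, rfl⟩
      refine ⟨⟨i.1, by have := j.isLt; omega⟩, ?_⟩
      have h1 : (⟨i.1, by have := i.isLt; omega⟩ : Fin n) = i := rfl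
      have h2 : (⟨i.1 + 1, by have := i.isLt; have := j.isLt; omega⟩ : Fin n) = j :=
        Fin.ext (by simp [hij])
      simp only [hg]
      congr 1
    · rintro ⟨i, rfl⟩
      exact ⟨⟨i.1, by have := i.isLt; omega⟩, ⟨i.1 + 1, by have := i.isLt; omega⟩, rfl, rfl⟩
  have hginj : Function.Injective g := by
    intro i i' h
    simp only [hg] at h
    have h1 : Equiv.swap (⟨i'.1, by have := i'.isLt; omega⟩ : Fin n)
        ⟨i'.1 + 1, by have := i'.isLt; omega⟩ ⟨i.1, by have := i.isLt; omega⟩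
        = ⟨i.1 + 1, by have := i.isLt; omega⟩ := by
      rw [← h, Equiv.swap_apply_left]
    rw [Equiv.swap_apply_def] at h1
    split_ifs at h1 with hc1 hc2
    · have e1 : i.1 = i'.1 := congrArg (Fin.val (n := n)) hc1
      exact Fin.ext e1
    · have e1 : i.1 = i'.1 + 1 := congrArg (Fin.val (n := n)) hc2
      have e2 : i'.1 = i.1 + 1 := congrArg (Fin.val (n := n)) h1
      exact Fin.ext (by omega)
    · have e : i.1 = i.1 + 1 := congrArg (Fin.val (n := n)) h1
      exact Fin.ext (by omega)
  rw [hrange, ← Set.image_univ, Set.ncard_image_of_injective _ hginj, Set.ncard_univ,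
    Nat.card_eq_fintype_card, Fintype.card_fin]

lemma no_reach_of_no_adj {V : Type*} {G : SimpleGraph V} {u v : V} (hne : u ≠ v)
    (h : ∀ x, ¬ G.Adj u x) : ¬ G.Reachable u v := by
  rintro ⟨p⟩
  cases p with
  | nil => exact hne rfl
  | cons h' _ => exact h _ h'

lemma bsg_disconn {n : ℕ} (hn : 3 ≤ n) :
    ¬ ((bubbleSortGraph n).induce
      {τ : Equiv.Perm (Fin n) | ∃ i j : Fin n, (j : ℕ) = (i : ℕ) + 1 ∧ τ = Equiv.swap i j}ᶜ).Connected := by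
  set N := {τ : Equiv.Perm (Fin n) | ∃ i j : Fin n, (j : ℕ) = (i : ℕ) + 1 ∧ τ = Equiv.swap i j}
    with hN
  set a0 : Fin n := ⟨0, by omega⟩
  set a1 : Fin n := ⟨1, by omega⟩
  set a2 : Fin n := ⟨2, by omega⟩
  have h01 : a0 ≠ a1 := by simp [a0, a1, Fin.ext_iff]
  have h02 : a0 ≠ a2 := by simp [a0, a2, Fin.ext_iff]
  have h12 : a1 ≠ a2 := by simp [a1, a2, Fin.ext_iff]
  set w : Equiv.Perm (Fin n) := Equiv.swap a0 a1 * Equiv.swap a1 a2 with hw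
  have hwa0 : w a0 = a1 := by
    rw [hw, Equiv.Perm.mul_apply, Equiv.swap_apply_of_ne_of_ne h01 h02, Equiv.swap_apply_left]
  have hwa1 : w a1 = a2 := by
    rw [hw, Equiv.Perm.mul_apply, Equiv.swap_apply_left,
      Equiv.swap_apply_of_ne_of_ne h02.symm h12.symm]
  have h1N : (1 : Equiv.Perm (Fin n)) ∉ N := by
    rintro ⟨i, j, hij, h⟩
    have : (1 : Equiv.Perm (Fin n)) i = Equiv.swap i j i := by rw [h]
    rw [Equiv.Perm.one_apply, Equiv.swap_apply_left] at this
    have := congrArg Fin.val this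
    omega
  have hwne : w ≠ 1 := by
    intro h
    rw [h, Equiv.Perm.one_apply] at hwa0
    exact h01 hwa0
  have hwN : w ∉ N := by
    rintro ⟨i, j, hij, h⟩
    have hsq : w (w a0) = a0 := by
      rw [h, ← Equiv.Perm.mul_apply, Equiv.swap_mul_self, Equiv.Perm.one_apply]
    rw [hwa0, hwa1] at hsq
    exact h02 hsq.symm
  intro hcon
  have h1c : (1 : Equiv.Perm (Fin n)) ∈ Nᶜ := h1N
  have hwc : w ∈ Nᶜ := hwN
  refine no_reach_of_no_adj (G := (bubbleSortGraph n).induce Nᶜ)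
      (u := ⟨1, h1c⟩) (v := ⟨w, hwc⟩) ?_ ?_ (hcon.preconnected _ _)
  · intro h
    exact hwne (congrArg Subtype.val h).symm
  · rintro ⟨x, hx⟩ hadj
    have : (bubbleSortGraph n).Adj 1 x := hadj
    rw [bsg_adj] at this
    obtain ⟨i, j, hij, rfl⟩ := this
    exact hx ⟨i, j, hij, (one_mul _)⟩


theorem vertexConnectivity_bubbleSortGraph (n : ℕ) (hn : 2 ≤ n) :
    vertexConnectivity (bubbleSortGraph n) = n - 1 := by
  set N := {τ : Equiv.Perm (Fin n) | ∃ i j : Fin n, (j : ℕ) = (i : ℕ) + 1 ∧ τ = Equiv.swap i j}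
    with hN
  have hNcard : N.ncard = n - 1 := nbhd_card hn
  have hmem : (n - 1) ∈ {k : ℕ | ∃ S : Set (Equiv.Perm (Fin n)),
      S.ncard = k ∧ (¬ ((bubbleSortGraph n).induce Sᶜ).Connected ∨ Sᶜ.ncard ≤ 1)} := by
    refine ⟨N, hNcard, ?_⟩
    rcases eq_or_lt_of_le hn with h2 | h3
    · right
      have hcc := Set.ncard_add_ncard_compl N
      rw [Nat.card_eq_fintype_card, Fintype.card_perm, Fintype.card_fin] at hcc
      have hfact : Nat.factorial n = 2 := by rw [← h2]; rfl
      omega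
    · left
      exact bsg_disconn h3
  refine le_antisymm (Nat.sInf_le hmem) (le_csInf ⟨_, hmem⟩ ?_)
  rintro k ⟨S, hScard, hdis⟩
  by_contra hlt
  push_neg at hlt
  have hS2 : S.ncard + 2 ≤ n := by omega
  rcases hdis with hd | hd
  · exact hd (bsg_del_connected n hn S hS2)
  · have hcc := Set.ncard_add_ncard_compl S
    rw [Nat.card_eq_fintype_card, Fintype.card_perm, Fintype.card_fin] at hcc
    have h4 := Nat.self_le_factorial n
    omega
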